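/- Let X be a Cubist subset of ℤ^r and z ∈ X. The following are equivalent: (1) z is a maximal element of X with respect to the componentwise order ≤; (2) for all x ∈ ℤ^r, if z − (1,...,1) < x ≤ z then x ∈ X; (3) the subset X' obtained from X by replacing z with z − (1,...,1) is again a Cubist subset of ℤ^r. -/
import Mathlib


/-- The translate `S[ζ] = {x + ζ(1,...,1) : x ∈ S}`. -/
def trSet {r : ℕ} (S : Set (Fin r → ℤ)) (ζ : ℤ) : Set (Fin r → ℤ) :=
  (fun x => x + fun _ => ζ) '' S

/-- A Cubist subset of `ℤ^r`: `X = X⁻ \ X⁻[-1]` for a nonempty proper ideal `X⁻`. -/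
def IsCubist {r : ℕ} (X : Set (Fin r → ℤ)) : Prop :=
  ∃ I : Set (Fin r → ℤ), I.Nonempty ∧ I ≠ Set.univ ∧ IsLowerSet I ∧ X = I \ trSet I (-1)

lemma mem_trSet_neg_one {r : ℕ} {S : Set (Fin r → ℤ)} {y : Fin r → ℤ} :
    y ∈ trSet S (-1) ↔ y + 1 ∈ S := by
  constructor
  · rintro ⟨x, hx, rfl⟩
    have hxx : (x + fun _ => (-1 : ℤ)) + 1 = x := by
      funext i; simp
    rwa [hxx]
  · intro h
    refine ⟨y + 1, h, ?_⟩
    funext i; simp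

/-- for `z` in a Cubist subset `X`, the following are equivalent:
(1) `z` is maximal in `X` for the componentwise order; (2) every `x` with
`z - (1,...,1) < x ≤ z` lies in `X`; (3) replacing `z` by `z - (1,...,1)` yields
a Cubist subset. -/
theorem flip_equivalences (r : ℕ) (X : Set (Fin r → ℤ)) (hX : IsCubist X)
    (z : Fin r → ℤ) (hz : z ∈ X) :
    ((∀ w ∈ X, z ≤ w → w = z) ↔
      (∀ x : Fin r → ℤ, z - 1 < x → x ≤ z → x ∈ X)) ∧
    ((∀ w ∈ X, z ≤ w → w = z) ↔ IsCubist ((X \ {z}) ∪ {z - 1})) := by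
  obtain ⟨I, hne, hproper, hlow, hXI⟩ := hX
  have hzd : z ∈ I \ trSet I (-1) := hXI ▸ hz
  have hzI : z ∈ I := hzd.1
  have hz1I : z + 1 ∉ I := fun h => hzd.2 (mem_trSet_neg_one.mpr h)
  rcases Nat.eq_zero_or_pos r with h0 | hr
  · exfalso
    subst h0
    have : z + 1 = z := by funext i; exact i.elim0
    exact hz1I (by rw [this]; exact hzI)
  have i0 : Fin r := ⟨0, hr⟩
  have hzsub : z - 1 ≠ z := by
    intro h
    have h2 := congrFun h i0
    simp only [Pi.sub_apply, Pi.one_apply] at h2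
    omega
  -- (1) → (2)
  have max_to_box : (∀ w ∈ X, z ≤ w → w = z) →
      ∀ x : Fin r → ℤ, z - 1 < x → x ≤ z → x ∈ X := by
    intro hmax x hlt hle
    have hxI : x ∈ I := hlow hle hzI
    have hx1 : x + 1 ∉ I := by
      intro hx1I
      have hx2 : x + 1 + 1 ∉ I := by
        intro h2
        refine hz1I (hlow ?_ h2)
        intro i
        have := hlt.le i
        simp only [Pi.sub_apply, Pi.one_apply, Pi.add_apply] at this ⊢
        omega
      have hx1X : x + 1 ∈ X := by
        rw [hXI]
        exact ⟨hx1I, fun hm => hx2 (mem_trSet_neg_one.mp hm)⟩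
      have hzle : z ≤ x + 1 := by
        intro i
        have := hlt.le i
        simp only [Pi.sub_apply, Pi.one_apply, Pi.add_apply] at this ⊢
        omega
      have heq := hmax (x + 1) hx1X hzle
      apply hlt.ne
      funext i
      have := congrFun heq i
      simp only [Pi.sub_apply, Pi.one_apply, Pi.add_apply] at this ⊢
      omega
    rw [hXI]
    exact ⟨hxI, fun hm => hx1 (mem_trSet_neg_one.mp hm)⟩
  -- (2) → (1)
  have box_to_max : (∀ x : Fin r → ℤ, z - 1 < x → x ≤ z → x ∈ X) →
      ∀ w ∈ X, z ≤ w → w = z := by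
    intro hbox w hw hle
    by_contra hne
    obtain ⟨i, hi⟩ := Function.ne_iff.mp hne
    set x : Fin r → ℤ := fun j => if w j = z j then z j - 1 else z j with hxdef
    have hlt : z - 1 < x := by
      refine lt_of_le_of_ne ?_ ?_
      · intro j
        simp only [hxdef, Pi.sub_apply, Pi.one_apply]
        split <;> omega
      · intro h
        have h2 := congrFun h i
        simp only [hxdef, Pi.sub_apply, Pi.one_apply, if_neg hi] at h2
        omega
    have hlez : x ≤ z := by
      intro j
      simp only [hxdef]
      split <;> omega
    have hxX := hbox x hlt hlez
    have hx1w : x + 1 ≤ w := by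
      intro j
      have hj : z j ≤ w j := hle j
      simp only [hxdef, Pi.add_apply, Pi.one_apply]
      rcases eq_or_ne (w j) (z j) with h | h
      · simp [h]
      · rw [if_neg h]; omega
    have hwI : w ∈ I := (hXI ▸ hw).1
    have hx1I : x + 1 ∈ I := hlow hx1w hwI
    exact (hXI ▸ hxX).2 (mem_trSet_neg_one.mpr hx1I)
  -- (1) → (3)
  have max_to_cubist : (∀ w ∈ X, z ≤ w → w = z) → IsCubist ((X \ {z}) ∪ {z - 1}) := by
    intro hmax
    have hz1mem : z - 1 ∈ I := by
      refine hlow ?_ hzI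
      intro j
      simp only [Pi.sub_apply, Pi.one_apply]
      omega
    refine ⟨I \ {z}, ⟨z - 1, hz1mem, hzsub⟩, ?_, ?_, ?_⟩
    · intro h
      have : z ∈ (Set.univ : Set (Fin r → ℤ)) := Set.mem_univ z
      rw [← h] at this
      exact this.2 rfl
    · intro a b hba ha
      refine ⟨hlow hba ha.1, ?_⟩
      intro hbz
      have hbz' : b = z := hbz
      have hza : z ≤ a := hbz' ▸ hba
      have haX : a ∈ X := by
        rw [hXI]
        refine ⟨ha.1, fun hm => ?_⟩
        have ha1 : a + 1 ∈ I := mem_trSet_neg_one.mp hm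
        refine hz1I (hlow ?_ ha1)
        intro j
        have hj : z j ≤ a j := hza j
        simp only [Pi.add_apply, Pi.one_apply]
        omega
      exact ha.2 (hmax a haX hza)
    · ext y
      have hiff : y + 1 = z ↔ y = z - 1 := by
        constructor
        · intro h; rw [← h]; funext j; simp
        · intro h; rw [h]; funext j; simp
      simp only [Set.mem_union, Set.mem_diff, Set.mem_singleton_iff, hXI,
        mem_trSet_neg_one]
      constructor
      · rintro (⟨⟨hyI, hy1⟩, hyz⟩ | hy)
        · exact ⟨⟨hyI, hyz⟩, fun h => hy1 h.1⟩
        · refine ⟨⟨hy ▸ hz1mem, hy ▸ hzsub⟩, fun h => h.2 (hiff.mpr hy)⟩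
      · rintro ⟨⟨hyI, hyz⟩, hy1⟩
        rcases eq_or_ne y (z - 1) with h | h
        · exact Or.inr h
        · refine Or.inl ⟨⟨hyI, fun h1 => ?_⟩, hyz⟩
          exact hy1 ⟨h1, fun he => h (hiff.mp he)⟩
  -- (3) → (1)
  have cubist_to_max : IsCubist ((X \ {z}) ∪ {z - 1}) → ∀ w ∈ X, z ≤ w → w = z := by
    rintro ⟨J, -, -, hJlow, hXJ⟩ w hw hle
    by_contra hne
    have hwX' : w ∈ (X \ {z}) ∪ {z - 1} := Or.inl ⟨hw, hne⟩
    have hz1X' : z - 1 ∈ (X \ {z}) ∪ {z - 1} := Or.inr rfl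
    rw [hXJ] at hwX' hz1X'
    have hwJ : w ∈ J := hwX'.1
    have hzJ : z ∈ J := hJlow hle hwJ
    apply hz1X'.2
    refine mem_trSet_neg_one.mpr ?_
    have : z - 1 + 1 = z := by funext j; simp
    rwa [this]
  exact ⟨⟨max_to_box, box_to_max⟩, ⟨max_to_cubist, cubist_to_max⟩⟩
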